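/- For all a, b ∈ ℂ with b ≠ 0, the set K_{a,b} of points of ℂ² with bounded full orbit under the Hénon map f_{a,b} is contained in the closed polydisk {(x,y) ∈ ℂ² : max(|x|, |y|) ≤ R}, where R = ((1+|b|) + √((1+|b|)² + 4|a|))/2. In particular K_{a,b} is a bounded subset of ℂ². -/

import Mathlib

noncomputable section

/-- The complex Hénon map `f_{a,b}(x,y) = (x² + a − b y, x)`. -/
def henonMap (a b : ℂ) : ℂ × ℂ → ℂ × ℂ :=
  fun p => (p.1 ^ 2 + a - b * p.2, p.1)

/-- For `b ≠ 0`, the Hénon map `f_{a,b}` as a bijection of `ℂ²`. -/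
def henon (a b : ℂ) (hb : b ≠ 0) : Equiv.Perm (ℂ × ℂ) where
  toFun := henonMap a b
  invFun p := (p.2, (p.2 ^ 2 + a - p.1) / b)
  left_inv p := by
    obtain ⟨x, y⟩ := p
    simp only [henonMap]
    refine Prod.ext rfl ?_
    field_simp
    ring
  right_inv p := by
    obtain ⟨x, y⟩ := p
    simp only [henonMap]
    refine Prod.ext ?_ rfl
    field_simp
    ring

/-- `K_{a,b}`: the set of points of `ℂ²` whose full orbit under `f_{a,b}` is bounded. -/
def henonK (a b : ℂ) (hb : b ≠ 0) : Set (ℂ × ℂ) :=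
  {p | Bornology.IsBounded (Set.range fun n : ℤ => ((henon a b hb) ^ n) p)}

end

/-- `K_{a,b}` is contained in the closed polydisk of radius
`R = ((1+|b|) + √((1+|b|)² + 4|a|))/2`; in particular it is bounded. -/
theorem henonK_subset_polydisk (a b : ℂ) (hb : b ≠ 0) :
    (∀ p ∈ henonK a b hb,
      max (‖p.1‖) (‖p.2‖) ≤
        ((1 + ‖b‖) +
          Real.sqrt ((1 + ‖b‖) ^ 2 + 4 * ‖a‖)) / 2) ∧
    Bornology.IsBounded (henonK a b hb) := by
  classical
  set cb := 1 + ‖b‖ with hcbdef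
  set A := ‖a‖ with hAdef
  set S := Real.sqrt (cb ^ 2 + 4 * A) with hSdef
  have hA0 : 0 ≤ A := norm_nonneg a
  have hb0 : 0 ≤ ‖b‖ := norm_nonneg b
  have hbpos : 0 < ‖b‖ := norm_pos_iff.mpr hb
  have hcb1 : 1 ≤ cb := by rw [hcbdef]; linarith
  have hS0 : 0 ≤ S := Real.sqrt_nonneg _
  have hS2 : S ^ 2 = cb ^ 2 + 4 * A := Real.sq_sqrt (by positivity)
  set σ := henon a b hb with hσdef
  have key : ∀ p ∈ henonK a b hb,
      max (‖p.1‖) (‖p.2‖) ≤ (cb + S) / 2 := by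
    intro p hp
    by_contra hR
    push_neg at hR
    have hp' : Bornology.IsBounded (Set.range fun n : ℤ => (σ ^ n) p) := hp
    obtain ⟨M, hM⟩ := isBounded_iff_forall_norm_le.mp hp'
    have hM' : ∀ n : ℤ, max (‖((σ ^ n) p).1‖) (‖((σ ^ n) p).2‖) ≤ M := by
      intro n
      have h := hM _ (Set.mem_range_self n)
      rw [Prod.norm_def] at h
      simpa using h
    rcases le_total (‖p.2‖) (‖p.1‖) with hxy | hxy
    · -- forward orbit escapes
      rw [max_eq_left hxy] at hR
      set x0 := ‖p.1‖ with hx0def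
      set d := x0 ^ 2 - cb * x0 - A with hddef
      have hd0 : 0 < d := by
        have h1 : S < 2 * x0 - cb := by linarith
        nlinarith [hS2]
      have grow : ∀ n : ℕ, ‖((σ ^ (n : ℤ)) p).2‖ ≤ ‖((σ ^ (n : ℤ)) p).1‖ ∧
          x0 + n * d ≤ ‖((σ ^ (n : ℤ)) p).1‖ := by
        intro n
        induction n with
        | zero =>
          simp only [Nat.cast_zero, zpow_zero, Equiv.Perm.coe_one, id_eq, zero_mul, add_zero]
          exact ⟨hxy, le_rfl⟩
        | succ n ih =>
          obtain ⟨ih1, ih2⟩ := ih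
          set q := (σ ^ (n : ℤ)) p with hqdef
          have hstep : (σ ^ ((n + 1 : ℕ) : ℤ)) p = henonMap a b q := by
            have e : ((n + 1 : ℕ) : ℤ) = 1 + (n : ℤ) := by push_cast; ring
            rw [e, zpow_add, zpow_one]
            rfl
          have hnn : (0 : ℝ) ≤ (n : ℝ) * d := mul_nonneg (Nat.cast_nonneg n) hd0.le
          have htx0 : x0 ≤ ‖q.1‖ := by linarith
          have habs1 : ‖q.1‖ ^ 2 - A - ‖b‖ * ‖q.2‖
              ≤ ‖(q.1 ^ 2 + a - b * q.2)‖ := by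
            have e : q.1 ^ 2 = (q.1 ^ 2 + a - b * q.2) + (b * q.2 - a) := by ring
            have t1 : ‖(q.1 ^ 2)‖ ≤
                ‖(q.1 ^ 2 + a - b * q.2)‖ + ‖(b * q.2 - a)‖ :=
              (congrArg norm e).le.trans (norm_add_le _ _)
            have t2 : ‖(b * q.2 - a)‖ ≤ ‖b‖ * ‖q.2‖ + A := by
              rw [hAdef, ← norm_mul]
              exact norm_sub_le _ _
            have t3 : ‖(q.1 ^ 2)‖ = ‖q.1‖ ^ 2 := norm_pow _ _
            linarith
          have hkey : 0 ≤ (‖q.1‖ - x0) * (‖q.1‖ + x0 - cb) := by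
            apply mul_nonneg
            · linarith
            · linarith
          have hbq : ‖b‖ * ‖q.2‖ ≤ ‖b‖ * ‖q.1‖ :=
            mul_le_mul_of_nonneg_left ih1 hb0
          have e1 : d ≤ ‖q.1‖ ^ 2 - cb * ‖q.1‖ - A := by
            nlinarith [hkey]
          have hcbt : cb * ‖q.1‖
              = ‖q.1‖ + ‖b‖ * ‖q.1‖ := by
            rw [hcbdef]; ring
          constructor
          · rw [hstep]
            simp only [henonMap]
            have : ‖q.1‖ ≤ ‖(q.1 ^ 2 + a - b * q.2)‖ := by
              linarith [habs1, hbq, e1, hd0.le, hcbt]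
            exact this
          · rw [hstep]
            simp only [henonMap]
            push_cast
            linarith [habs1, hbq, e1, ih2, hcbt]
      obtain ⟨n, hn⟩ := exists_nat_gt ((M - x0) / d)
      have h1 := (grow n).2
      have h2 := le_max_left (‖((σ ^ (n : ℤ)) p).1‖)
        (‖((σ ^ (n : ℤ)) p).2‖)
      have h3 := hM' (n : ℤ)
      have h4 : (M - x0) / d < (n : ℝ) := hn
      rw [div_lt_iff₀ hd0] at h4
      linarith
    · -- backward orbit escapes
      rw [max_eq_right hxy] at hR
      set y0 := ‖p.2‖ with hy0def
      set d := y0 ^ 2 - cb * y0 - A with hddef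
      have hd0 : 0 < d := by
        have h1 : S < 2 * y0 - cb := by linarith
        nlinarith [hS2]
      set d' := d / ‖b‖ with hd'def
      have hd'0 : 0 < d' := div_pos hd0 hbpos
      have hd'b : d' * ‖b‖ = d := div_mul_cancel₀ _ hbpos.ne'
      have grow : ∀ n : ℕ, ‖((σ ^ (-(n : ℤ))) p).1‖ ≤ ‖((σ ^ (-(n : ℤ))) p).2‖ ∧
          y0 + n * d' ≤ ‖((σ ^ (-(n : ℤ))) p).2‖ := by
        intro n
        induction n with
        | zero =>
          simp only [Nat.cast_zero, neg_zero, zpow_zero, Equiv.Perm.coe_one, id_eq,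
            zero_mul, add_zero]
          exact ⟨hxy, le_rfl⟩
        | succ n ih =>
          obtain ⟨ih1, ih2⟩ := ih
          set q := (σ ^ (-(n : ℤ))) p with hqdef
          have hstep : (σ ^ (-((n + 1 : ℕ) : ℤ))) p = (q.2, (q.2 ^ 2 + a - q.1) / b) := by
            have e : (-((n + 1 : ℕ) : ℤ)) = -1 + -(n : ℤ) := by push_cast; ring
            rw [e, zpow_add, zpow_neg_one]
            rfl
          have hnn : (0 : ℝ) ≤ (n : ℝ) * d' := mul_nonneg (Nat.cast_nonneg n) hd'0.le
          have hty0 : y0 ≤ ‖q.2‖ := by linarith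
          have habs1 : ‖q.2‖ ^ 2 - A - ‖q.1‖
              ≤ ‖(q.2 ^ 2 + a - q.1)‖ := by
            have e : q.2 ^ 2 = (q.2 ^ 2 + a - q.1) + (q.1 - a) := by ring
            have t1 : ‖(q.2 ^ 2)‖ ≤
                ‖(q.2 ^ 2 + a - q.1)‖ + ‖(q.1 - a)‖ :=
              (congrArg norm e).le.trans (norm_add_le _ _)
            have t2 : ‖(q.1 - a)‖ ≤ ‖q.1‖ + A := by
              rw [hAdef]
              exact norm_sub_le _ _
            have t3 : ‖(q.2 ^ 2)‖ = ‖q.2‖ ^ 2 := norm_pow _ _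
            linarith
          have hkey : 0 ≤ (‖q.2‖ - y0) * (‖q.2‖ + y0 - cb) := by
            apply mul_nonneg
            · linarith
            · linarith
          have hdivabs : ‖((q.2 ^ 2 + a - q.1) / b)‖
              = ‖(q.2 ^ 2 + a - q.1)‖ / ‖b‖ := norm_div _ _
          have e1 : d ≤ ‖q.2‖ ^ 2 - cb * ‖q.2‖ - A := by
            nlinarith [hkey]
          have hcbt : cb * ‖q.2‖
              = ‖q.2‖ + ‖b‖ * ‖q.2‖ := by
            rw [hcbdef]; ring
          have hmain : (y0 + ((n : ℝ) + 1) * d') * ‖b‖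
              ≤ ‖(q.2 ^ 2 + a - q.1)‖ := by
            have hn1 : ((n : ℝ) + 1) * (d' * ‖b‖) = ((n : ℝ) + 1) * d := by
              rw [hd'b]
            have hbt : ‖b‖ * y0 + ‖b‖ * ((n : ℝ) * d')
                ≤ ‖b‖ * ‖q.2‖ := by
              have := mul_le_mul_of_nonneg_left ih2 hb0
              linarith [this, mul_add (‖b‖) y0 ((n : ℝ) * d')]
            have hNd : (n : ℝ) * d' * ‖b‖ = (n : ℝ) * d := by
              rw [mul_assoc, hd'b]
            linarith [habs1, ih1, e1, hbt, hd'b, hNd, hcbt]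
          constructor
          · rw [hstep]
            simp only
            rw [hdivabs, le_div_iff₀ hbpos]
            linarith [habs1, ih1, e1, hd0.le, hcbt]
          · rw [hstep]
            simp only
            rw [hdivabs, le_div_iff₀ hbpos]
            push_cast
            exact hmain
      obtain ⟨n, hn⟩ := exists_nat_gt ((M - y0) / d')
      have h1 := (grow n).2
      have h2 := le_max_right (‖((σ ^ (-(n : ℤ))) p).1‖)
        (‖((σ ^ (-(n : ℤ))) p).2‖)
      have h3 := hM' (-(n : ℤ))
      have h4 : (M - y0) / d' < (n : ℝ) := hn
      rw [div_lt_iff₀ hd'0] at h4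
      linarith
  refine ⟨key, ?_⟩
  rw [isBounded_iff_forall_norm_le]
  refine ⟨(cb + S) / 2, fun p hp => ?_⟩
  rw [Prod.norm_def]
  simpa using key p hp
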